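/- The set Γ(k) = {(x,X) ∈ ℂ² | X² = 1 + x⁴ - (k+1/k)x²}, with product (p,P)·(q,Q) = ((pQ+qP)/(1-p²q²), (Pp(q⁴-1) - Qq(p⁴-1))/((1-p²q²)(qP-pQ))), identity (0,1), and inverse (p,P)⁻¹ = (-p,P), is closed under the product: if (p,P),(q,Q) ∈ Γ(k) and the denominators 1-p²q² and qP-pQ are nonzero, then (p,P)·(q,Q) ∈ Γ(k). -/

import Mathlib

/-- Membership of the Jacobi quartic curve `Γ(k)`. -/
def OnGamma (k : ℂ) (P : ℂ × ℂ) : Prop :=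
  P.2 ^ 2 = 1 + P.1 ^ 4 - (k + 1 / k) * P.1 ^ 2

/-- The rational group product on the Jacobi quartic curve is closed. -/
theorem stmt_9 (k : ℂ) (hk0 : k ≠ 0) (hk1 : k ≠ 1) (hk2 : k ≠ -1)
    (p P q Q : ℂ)
    (hp : OnGamma k (p, P)) (hq : OnGamma k (q, Q))
    (hd1 : 1 - p ^ 2 * q ^ 2 ≠ 0) (hd2 : q * P - p * Q ≠ 0) :
    OnGamma k ((p * Q + q * P) / (1 - p ^ 2 * q ^ 2),
      (P * p * (q ^ 4 - 1) - Q * q * (p ^ 4 - 1)) / ((1 - p ^ 2 * q ^ 2) * (q * P - p * Q))) := by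
  unfold OnGamma at *
  simp only at hp hq ⊢
  clear hk0 hk1 hk2
  generalize k + 1 / k = s at hp hq ⊢
  clear k
  field_simp
  rw [div_eq_iff (pow_ne_zero 2 (by rwa [mul_comm P q]))]
  apply mul_right_cancel₀ (pow_ne_zero 4 hd1)
  linear_combination ((1-p^2*q^2)^4) * (((-1)*q^2 + (1)*q^4*s + (1)*q^4*P^2*s + (-1)*q^6 + (-1)*q^6*P^2 + (-1)*q^6*P^4 + (-2)*p*q^5*P*Q + (-2)*p*q^5*P^3*Q + (1)*p^2 + (-2)*p^2*q^2*Q^2*s + (2)*p^2*q^4 + (-1)*p^2*q^4*s^2 + (1)*p^2*q^4*Q^2 + (1)*p^2*q^4*P^2*Q^2 + (-1)*p^2*q^6*P^2*s + (1)*p^2*q^8 + (4)*p^3*q^3*P*Q^3 + (2)*p^3*q^5*P*Q*s + (-2)*p^4*q^2 + (1)*p^4*q^2*Q^4 + (1)*p^4*q^4*s + (3)*p^4*q^4*Q^2*s + (-4)*p^4*q^6 + (1)*p^4*q^6*s^2 + (-1)*p^4*q^6*P^2 + (1)*p^4*q^8*s + (1)*p^4*q^8*P^2*s + (-2)*p^4*q^10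 + (-2)*p^5*q^5*P*Q + (1)*p^6*q^4 + (1)*p^6*q^4*Q^2 + (-2)*p^6*q^6*Q^2*s + (2)*p^6*q^8 + (-1)*p^6*q^8*s^2 + (1)*p^6*q^12 + (-1)*p^8*q^6 + (1)*p^8*q^8*s + (-1)*p^8*q^10) * hp + ((1)*q^2 + (-1)*p^2 + (-2)*p^2*q^2*s + (-1)*p^2*q^4 + (4)*p^3*q^3*P*Q + (1)*p^4*s + (1)*p^4*Q^2*s + (3)*p^4*q^2 + (1)*p^4*q^2*s^2 + (1)*p^4*q^2*Q^2 + (2)*p^4*q^4*s + (2)*p^4*q^6 + (-2)*p^5*q*P*Q + (-2)*p^5*q*P*Q^3 + (-2)*p^5*q^3*P*Q*s + (-2)*p^5*q^5*P*Q + (-1)*p^6 + (-1)*p^6*Q^2 + (-1)*p^6*Q^4 + (-3)*p^6*q^2*s + (-2)*p^6*q^2*Q^2*s + (-2)*p^6*q^4 + (-1)*p^6*q^4*s^2 + (-1)*p^6*q^4*Q^2 + (-3)*p^6*q^6*s + (-1)*p^6*q^8 + (4)*p^7*q^3*P*Q + (2)*p^8*q^2 + (1)*p^8*q^2*Q^2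 + (2)*p^8*q^4*s + (1)*p^8*q^4*Q^2*s + (3)*p^8*q^6 + (1)*p^8*q^6*s^2 + (1)*p^8*q^8*s + (-1)*p^10*q^4 + (-2)*p^10*q^6*s + (-1)*p^10*q^8 + (1)*p^12*q^6) * hq)
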